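/- The bulk fusion relation holds: L₁₃(z,r) R₂₃(z) (ι(r) ⊗ Id_V) = (1 − z²)(ι(r) ⊗ Id_V) L(qz, qr) as maps W ⊗ V → W ⊗ V ⊗ V. -/

import Mathlib

noncomputable section

open Finsupp Matrix

/-- The infinite-dimensional space `W = ⊕_{j≥0} ℂ w^j`. -/
abbrev Wsp : Type := ℕ →₀ ℂ

abbrev EndW : Type := Module.End ℂ Wsp

/-- The basis vector `w^j`. -/
def wv (j : ℕ) : Wsp := Finsupp.single j 1

/-- The linear operator on `W` determined by its values on the basis. -/
def mkOp (g : ℕ → Wsp) : EndW :=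
  Finsupp.lsum ℂ fun j => LinearMap.toSpanSingleton ℂ Wsp (g j)

/-- The annihilation operator `a`. -/
def opA : EndW := mkOp fun j => match j with | 0 => 0 | i + 1 => wv i

/-- The creation operator `a†`. -/
def opAdag (q : ℂ) : EndW := mkOp fun j => (1 - q ^ (2 * (j + 1))) • wv (j + 1)

/-- The diagonal operator `f(D)`. -/
def opDiag (f : ℕ → ℂ) : EndW := mkOp fun j => f j • wv j

/-- The L-operator `L(z,r)` on `W ⊗ ℂ²`, written as a 2×2 matrix with entries in `End(W)`. -/
def Lmat (q z r : ℂ) : Matrix (Fin 2) (Fin 2) EndW :=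
  !![1, -(q⁻¹ * z) • opAdag q;
     -(q * z) • opA, opDiag fun j => 1 - q ^ (2 * (j + 1)) * z ^ 2] *
  !![r • opDiag (fun j => q ^ j), 0;
     0, opDiag fun j => (q ^ j)⁻¹]

/-- The components of the fusion intertwiner `ι(r) : W → W ⊗ V`,
`ι(r)(w^j) = (q^{-j-1} - q^{j+1}) w^{j+1} ⊗ v⁰ + q^{j+1} r w^j ⊗ v¹`. -/
def iotaC (q r : ℂ) : Fin 2 → EndW :=
  ![mkOp fun j => ((q⁻¹) ^ (j + 1) - q ^ (j + 1)) • wv (j + 1),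
    opDiag fun j => q ^ (j + 1) * r]

/-- The components of the fusion intertwiner `τ(r) : W ⊗ V → W`,
`τ(r)(w^j ⊗ v⁰) = q^j w^j`, `τ(r)(w^j ⊗ v¹) = (q^{j+1} - q^{-j-1}) r⁻¹ w^{j+1}`. -/
def tauC (q r : ℂ) : Fin 2 → EndW :=
  ![opDiag fun j => q ^ j,
    mkOp fun j => ((q ^ (j + 1) - (q⁻¹) ^ (j + 1)) * r⁻¹) • wv (j + 1)]

/-- The R-matrix `R(z)` on `ℂ² ⊗ ℂ²`, indexed by pairs. -/
def Rc (q z : ℂ) : Matrix (Fin 2 × Fin 2) (Fin 2 × Fin 2) ℂ :=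
  Matrix.of fun p p' =>
    if p = p' then (if p.1 = p.2 then 1 - q ^ 2 * z ^ 2 else q * (1 - z ^ 2))
    else if p.1 = p'.2 ∧ p.2 = p'.1 then (1 - q ^ 2) * z else 0

/-- `R₂₃(z)` acting in the second and third factors of `W ⊗ V ⊗ V`. -/
def R23m (q z : ℂ) : Matrix (Fin 2 × Fin 2) (Fin 2 × Fin 2) EndW :=
  Matrix.of fun p p' => Rc q z p p' • (1 : EndW)

/-- `L₁₃(z,r)` acting in the first and third factors of `W ⊗ V ⊗ V`. -/
def L13m (q z r : ℂ) : Matrix (Fin 2 × Fin 2) (Fin 2 × Fin 2) EndW :=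
  Matrix.of fun p p' => if p.1 = p'.1 then Lmat q z r p.2 p'.2 else 0

/-- `ι(r) ⊗ Id_V : W ⊗ V → W ⊗ V ⊗ V`. -/
def iotaExt (q r : ℂ) : Matrix (Fin 2 × Fin 2) (Fin 2) EndW :=
  Matrix.of fun p d => if p.2 = d then iotaC q r p.1 else 0

/-- `τ(r) ⊗ Id_V : W ⊗ V ⊗ V → W ⊗ V`. -/
def tauExt (q r : ℂ) : Matrix (Fin 2) (Fin 2 × Fin 2) EndW :=
  Matrix.of fun d p => if p.2 = d then tauC q r p.1 else 0


lemma mkOp_wv (g : ℕ → Wsp) (j : ℕ) : mkOp g (wv j) = g j := by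
  simp [mkOp, wv]

lemma endW_ext {f g : EndW} (h : ∀ j, f (wv j) = g (wv j)) : f = g :=
  Finsupp.lhom_ext fun a b => by
    have hb : Finsupp.single a b = b • wv a := by simp [wv, Finsupp.smul_single]
    rw [hb, _root_.map_smul, _root_.map_smul, h]

lemma opA_wv0 : opA (wv 0) = 0 := by simp [opA, mkOp_wv]
lemma opA_wvS (j : ℕ) : opA (wv (j + 1)) = wv j := by simp [opA, mkOp_wv]
lemma opAdag_wv (q : ℂ) (j : ℕ) :
    opAdag q (wv j) = (1 - q ^ (2 * (j + 1))) • wv (j + 1) := by simp [opAdag, mkOp_wv]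
lemma opDiag_wv (f : ℕ → ℂ) (j : ℕ) : opDiag f (wv j) = f j • wv j := by
  simp [opDiag, mkOp_wv]

lemma Lmat00 (q z r : ℂ) : Lmat q z r 0 0 = r • opDiag (fun j => q ^ j) := by
  simp [Lmat, Matrix.mul_apply, Fin.sum_univ_two]
lemma Lmat01 (q z r : ℂ) :
    Lmat q z r 0 1 = -(q⁻¹ * z) • (opAdag q * opDiag fun j => (q ^ j)⁻¹) := by
  simp [Lmat, Matrix.mul_apply, Fin.sum_univ_two]
lemma Lmat10 (q z r : ℂ) :
    Lmat q z r 1 0 = (-(q * z) * r) • (opA * opDiag fun j => q ^ j) := by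
  simp [Lmat, Matrix.mul_apply, Fin.sum_univ_two, smul_smul, mul_comm]
lemma Lmat11 (q z r : ℂ) :
    Lmat q z r 1 1 =
      (opDiag fun j => 1 - q ^ (2 * (j + 1)) * z ^ 2) * opDiag fun j => (q ^ j)⁻¹ := by
  simp [Lmat, Matrix.mul_apply, Fin.sum_univ_two]

set_option maxHeartbeats 4000000 in
lemma fusion_case000 (q z r : ℂ) (hq0 : q ≠ 0) (hz : z ≠ 0) (hr : r ≠ 0) (j : ℕ) :
    (L13m q z r * R23m q z * iotaExt q r) (0,0) 0 (wv j) =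
      (((1 : ℂ) - z ^ 2) • (iotaExt q r * Lmat q (q * z) (q * r))) (0,0) 0 (wv j) := by
  rcases j with _ | j <;>
  · simp [L13m, R23m, iotaExt, Rc, iotaC, Lmat00, Lmat01, Lmat10, Lmat11,
      Matrix.mul_apply, Fintype.sum_prod_type, Fin.sum_univ_two,
      Module.End.mul_apply, mkOp_wv, opA_wv0, opA_wvS, opAdag_wv, opDiag_wv, smul_smul,
      Prod.ext_iff]
    all_goals (ext m; simp [wv, Finsupp.single_apply]; split_ifs <;>
      first | rfl | omega | ring1 | (field_simp; ring1) | simp)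

set_option maxHeartbeats 4000000 in
lemma fusion_case001 (q z r : ℂ) (hq0 : q ≠ 0) (hz : z ≠ 0) (hr : r ≠ 0) (j : ℕ) :
    (L13m q z r * R23m q z * iotaExt q r) (0,0) 1 (wv j) =
      (((1 : ℂ) - z ^ 2) • (iotaExt q r * Lmat q (q * z) (q * r))) (0,0) 1 (wv j) := by
  rcases j with _ | j <;>
  · simp [L13m, R23m, iotaExt, Rc, iotaC, Lmat00, Lmat01, Lmat10, Lmat11,
      Matrix.mul_apply, Fintype.sum_prod_type, Fin.sum_univ_two,
      Module.End.mul_apply, mkOp_wv, opA_wv0, opA_wvS, opAdag_wv, opDiag_wv, smul_smul,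
      Prod.ext_iff]
    all_goals (ext m; simp [wv, Finsupp.single_apply]; split_ifs <;>
      first | rfl | omega | ring1 | (field_simp; ring1) | field_simp | simp)

set_option maxHeartbeats 4000000 in
lemma fusion_case010 (q z r : ℂ) (hq0 : q ≠ 0) (hz : z ≠ 0) (hr : r ≠ 0) (j : ℕ) :
    (L13m q z r * R23m q z * iotaExt q r) (0,1) 0 (wv j) =
      (((1 : ℂ) - z ^ 2) • (iotaExt q r * Lmat q (q * z) (q * r))) (0,1) 0 (wv j) := by
  rcases j with _ | j <;>
  · simp [L13m, R23m, iotaExt, Rc, iotaC, Lmat00, Lmat01, Lmat10, Lmat11,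
      Matrix.mul_apply, Fintype.sum_prod_type, Fin.sum_univ_two,
      Module.End.mul_apply, mkOp_wv, opA_wv0, opA_wvS, opAdag_wv, opDiag_wv, smul_smul,
      Prod.ext_iff]
    all_goals (ext m; simp [wv, Finsupp.single_apply]; split_ifs <;>
      first | rfl | omega | ring1 | (field_simp; ring1) | simp)

set_option maxHeartbeats 4000000 in
lemma fusion_case011 (q z r : ℂ) (hq0 : q ≠ 0) (hz : z ≠ 0) (hr : r ≠ 0) (j : ℕ) :
    (L13m q z r * R23m q z * iotaExt q r) (0,1) 1 (wv j) =
      (((1 : ℂ) - z ^ 2) • (iotaExt q r * Lmat q (q * z) (q * r))) (0,1) 1 (wv j) := by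
  rcases j with _ | j <;>
  · simp [L13m, R23m, iotaExt, Rc, iotaC, Lmat00, Lmat01, Lmat10, Lmat11,
      Matrix.mul_apply, Fintype.sum_prod_type, Fin.sum_univ_two,
      Module.End.mul_apply, mkOp_wv, opA_wv0, opA_wvS, opAdag_wv, opDiag_wv, smul_smul,
      Prod.ext_iff]
    all_goals (ext m; simp [wv, Finsupp.single_apply]; split_ifs <;>
      first | rfl | omega | ring1 | (field_simp; ring1) | field_simp | simp)

set_option maxHeartbeats 4000000 in
lemma fusion_case100 (q z r : ℂ) (hq0 : q ≠ 0) (hz : z ≠ 0) (hr : r ≠ 0) (j : ℕ) :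
    (L13m q z r * R23m q z * iotaExt q r) (1,0) 0 (wv j) =
      (((1 : ℂ) - z ^ 2) • (iotaExt q r * Lmat q (q * z) (q * r))) (1,0) 0 (wv j) := by
  rcases j with _ | j <;>
  · simp [L13m, R23m, iotaExt, Rc, iotaC, Lmat00, Lmat01, Lmat10, Lmat11,
      Matrix.mul_apply, Fintype.sum_prod_type, Fin.sum_univ_two,
      Module.End.mul_apply, mkOp_wv, opA_wv0, opA_wvS, opAdag_wv, opDiag_wv, smul_smul,
      Prod.ext_iff]
    all_goals (ext m; simp [wv, Finsupp.single_apply]; split_ifs <;>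
      first | rfl | omega | ring1 | (field_simp; ring1) | simp)

set_option maxHeartbeats 4000000 in
lemma fusion_case101 (q z r : ℂ) (hq0 : q ≠ 0) (hz : z ≠ 0) (hr : r ≠ 0) (j : ℕ) :
    (L13m q z r * R23m q z * iotaExt q r) (1,0) 1 (wv j) =
      (((1 : ℂ) - z ^ 2) • (iotaExt q r * Lmat q (q * z) (q * r))) (1,0) 1 (wv j) := by
  rcases j with _ | j <;>
  · simp [L13m, R23m, iotaExt, Rc, iotaC, Lmat00, Lmat01, Lmat10, Lmat11,
      Matrix.mul_apply, Fintype.sum_prod_type, Fin.sum_univ_two,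
      Module.End.mul_apply, mkOp_wv, opA_wv0, opA_wvS, opAdag_wv, opDiag_wv, smul_smul,
      Prod.ext_iff]
    all_goals (ext m; simp [wv, Finsupp.single_apply]; split_ifs <;>
      first | rfl | omega | ring1 | (field_simp; ring1) | simp)

set_option maxHeartbeats 4000000 in
lemma fusion_case110 (q z r : ℂ) (hq0 : q ≠ 0) (hz : z ≠ 0) (hr : r ≠ 0) (j : ℕ) :
    (L13m q z r * R23m q z * iotaExt q r) (1,1) 0 (wv j) =
      (((1 : ℂ) - z ^ 2) • (iotaExt q r * Lmat q (q * z) (q * r))) (1,1) 0 (wv j) := by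
  rcases j with _ | j <;>
  · simp [L13m, R23m, iotaExt, Rc, iotaC, Lmat00, Lmat01, Lmat10, Lmat11,
      Matrix.mul_apply, Fintype.sum_prod_type, Fin.sum_univ_two,
      Module.End.mul_apply, mkOp_wv, opA_wv0, opA_wvS, opAdag_wv, opDiag_wv, smul_smul,
      Prod.ext_iff]
    all_goals (ext m; simp [wv, Finsupp.single_apply]; split_ifs <;>
      first | rfl | omega | ring1 | (field_simp; ring1) | simp)

set_option maxHeartbeats 4000000 in
lemma fusion_case111 (q z r : ℂ) (hq0 : q ≠ 0) (hz : z ≠ 0) (hr : r ≠ 0) (j : ℕ) :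
    (L13m q z r * R23m q z * iotaExt q r) (1,1) 1 (wv j) =
      (((1 : ℂ) - z ^ 2) • (iotaExt q r * Lmat q (q * z) (q * r))) (1,1) 1 (wv j) := by
  rcases j with _ | j <;>
  · simp [L13m, R23m, iotaExt, Rc, iotaC, Lmat00, Lmat01, Lmat10, Lmat11,
      Matrix.mul_apply, Fintype.sum_prod_type, Fin.sum_univ_two,
      Module.End.mul_apply, mkOp_wv, opA_wv0, opA_wvS, opAdag_wv, opDiag_wv, smul_smul,
      Prod.ext_iff]
    all_goals (ext m; simp [wv, Finsupp.single_apply]; split_ifs <;>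
      first | rfl | omega | ring1 | (field_simp; ring1) | simp)

/-- bulk fusion relation
`L₁₃(z,r) R₂₃(z) (ι(r) ⊗ Id_V) = (1-z²)(ι(r) ⊗ Id_V) L(qz,qr)` as maps
`W ⊗ V → W ⊗ V ⊗ V`. -/
theorem bulk_fusion_iota (q z r : ℂ) (hq0 : q ≠ 0) (hq1 : q ≠ 1) (hqm1 : q ≠ -1)
    (hz : z ≠ 0) (hr : r ≠ 0) :
    L13m q z r * R23m q z * iotaExt q r =
      ((1 : ℂ) - z ^ 2) • (iotaExt q r * Lmat q (q * z) (q * r)) := by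
  apply Matrix.ext
  rintro ⟨p1, p2⟩ d
  apply endW_ext
  intro j
  fin_cases p1 <;> fin_cases p2 <;> fin_cases d
  · exact fusion_case000 q z r hq0 hz hr j
  · exact fusion_case001 q z r hq0 hz hr j
  · exact fusion_case010 q z r hq0 hz hr j
  · exact fusion_case011 q z r hq0 hz hr j
  · exact fusion_case100 q z r hq0 hz hr j
  · exact fusion_case101 q z r hq0 hz hr j
  · exact fusion_case110 q z r hq0 hz hr j
  · exact fusion_case111 q z r hq0 hz hr j
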